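/- For |q| < 1, one has ∑_{n≥0} qⁿ/((q;q)_n (1-q^{n+1})²) = q^{-1} ∑_{m≥0} ( 1/(q^{1+m};q)_∞ − 1 ). -/

import Mathlib

/-- The finite q-Pochhammer symbol `(q;q)_n`. -/
noncomputable def qPoch (q : ℂ) (n : ℕ) : ℂ := ∏ i ∈ Finset.range n, (1 - q ^ (i + 1))

/-- The infinite q-Pochhammer symbol `(q;q)_∞`. -/
noncomputable def qPochInf (q : ℂ) : ℂ := ∏' i : ℕ, (1 - q ^ (i + 1))

/-- The infinite q-Pochhammer symbol `(a;q)_∞ = ∏_{i≥0} (1 - a q^i)`. -/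
noncomputable def pochInf (a q : ℂ) : ℂ := ∏' i : ℕ, (1 - a * q ^ i)

open Complex Filter Topology

namespace Stmt11Aux

noncomputable def qc (q : ℂ) : ℝ := Real.exp (∑' i : ℕ, Real.log (1 - ‖q‖ ^ (i + 1)))
noncomputable def S (q z : ℂ) : ℂ := ∑' n : ℕ, z ^ n / qPoch q n

section aux
variable {q : ℂ} (hq : ‖q‖ < 1)
include hq

lemma pow_lt' (i : ℕ) : ‖q‖ ^ (i + 1) < 1 :=
  pow_lt_one₀ (norm_nonneg q) hq (Nat.succ_ne_zero i)

lemma log_nonpos' (i : ℕ) : Real.log (1 - ‖q‖ ^ (i + 1)) ≤ 0 :=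
  Real.log_nonpos (by nlinarith [pow_lt' hq i, pow_nonneg (norm_nonneg q) (i+1)])
    (by nlinarith [pow_nonneg (norm_nonneg q) (i+1)])

lemma log_summable : Summable (fun i : ℕ => Real.log (1 - ‖q‖ ^ (i + 1))) := by
  rw [← summable_neg_iff]
  have hb : Summable (fun i : ℕ => ‖q‖ ^ (i + 1) * (1 - ‖q‖)⁻¹) := by
    apply Summable.mul_right
    exact (summable_geometric_of_lt_one (norm_nonneg q) hq).comp_injective
      (add_left_injective 1)
  refine hb.of_nonneg_of_le (fun i => neg_nonneg.mpr (log_nonpos' hq i)) (fun i => ?_)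
  set x := ‖q‖ ^ (i + 1) with hx
  have hx0 : 0 ≤ x := pow_nonneg (norm_nonneg q) _
  have hx1 : x < 1 := pow_lt' hq i
  have h1x : 0 < 1 - x := by linarith
  have key : (1 - x)⁻¹ ≤ Real.exp (x / (1 - x)) := by
    have := Real.add_one_le_exp (x / (1 - x))
    have : 1 + x / (1 - x) ≤ Real.exp (x / (1 - x)) := by linarith
    calc (1 - x)⁻¹ = 1 + x / (1 - x) := by field_simp; ring
      _ ≤ _ := this
  have h2 : -Real.log (1 - x) = Real.log ((1 - x)⁻¹) := (Real.log_inv _).symm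
  rw [h2]
  calc Real.log ((1 - x)⁻¹) ≤ x / (1 - x) := by
        calc Real.log ((1-x)⁻¹) ≤ Real.log (Real.exp (x / (1-x))) :=
              Real.log_le_log (by positivity) key
          _ = x / (1 - x) := Real.log_exp _
    _ ≤ x * (1 - ‖q‖)⁻¹ := by
        rw [div_eq_mul_inv]
        apply mul_le_mul_of_nonneg_left _ hx0
        have hxq : x ≤ ‖q‖ := by
          have := pow_le_pow_of_le_one (norm_nonneg q) hq.le (show 1 ≤ i+1 by omega)
          simpa [hx] using this
        exact inv_anti₀ (by linarith) (by linarith)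

omit hq in
lemma qc_pos : 0 < qc q := Real.exp_pos _

lemma qc_le_prod (n : ℕ) : qc q ≤ ∏ i ∈ Finset.range n, (1 - ‖q‖ ^ (i + 1)) := by
  have hs := log_summable hq
  have hsplit := Summable.sum_add_tsum_nat_add n hs
  have hprodpos : ∀ i ∈ Finset.range n, (0:ℝ) < 1 - ‖q‖ ^ (i + 1) := fun i _ => by
    nlinarith [pow_lt' hq i, pow_nonneg (norm_nonneg q) (i+1)]
  have hexp : Real.exp (∑ i ∈ Finset.range n, Real.log (1 - ‖q‖ ^ (i + 1)))
      = ∏ i ∈ Finset.range n, (1 - ‖q‖ ^ (i + 1)) := by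
    rw [Real.exp_sum]
    exact Finset.prod_congr rfl (fun i hi => Real.exp_log (hprodpos i hi))
  have htail : (∑' i : ℕ, Real.log (1 - ‖q‖ ^ (i + n + 1))) ≤ 0 :=
    tsum_nonpos (fun i => log_nonpos' hq _)
  rw [qc, ← hsplit, Real.exp_add, hexp]
  nth_rewrite 2 [← mul_one (∏ i ∈ Finset.range n, (1 - ‖q‖ ^ (i + 1)))]
  apply mul_le_mul_of_nonneg_left _ (Finset.prod_nonneg (fun i hi => (hprodpos i hi).le))
  exact Real.exp_le_one_iff.mpr htail

lemma qc_le_qPoch (n : ℕ) : qc q ≤ ‖qPoch q n‖ := by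
  refine le_trans (qc_le_prod hq n) ?_
  rw [qPoch, norm_prod]
  apply Finset.prod_le_prod
  · intro i hi
    have h1 : ‖q‖ ^ (i+1) < 1 := pow_lt_one₀ (norm_nonneg q) hq (Nat.succ_ne_zero i)
    linarith
  · intro i _
    calc 1 - ‖q‖ ^ (i+1) = ‖(1:ℂ)‖ - ‖q ^ (i+1)‖ := by simp
      _ ≤ ‖1 - q ^ (i+1)‖ := norm_sub_norm_le _ _

lemma qPoch_ne_zero (n : ℕ) : qPoch q n ≠ 0 := by
  intro h
  have := qc_le_qPoch hq n
  rw [h, norm_zero] at this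
  exact absurd this (not_le.mpr (qc_pos (q := q)))

lemma summable_S {z : ℂ} (hz : ‖z‖ < 1) : Summable (fun n : ℕ => z ^ n / qPoch q n) := by
  apply Summable.of_norm_bounded (g := fun n => ‖z‖ ^ n * (qc q)⁻¹)
  · exact (summable_geometric_of_lt_one (norm_nonneg z) hz).mul_right _
  · intro n
    rw [norm_div, norm_pow, div_eq_mul_inv]
    exact mul_le_mul_of_nonneg_left (inv_anti₀ (qc_pos (q := q)) (qc_le_qPoch hq n))
      (pow_nonneg (norm_nonneg z) n)
lemma qPoch_succ (n : ℕ) : qPoch q (n + 1) = qPoch q n * (1 - q ^ (n + 1)) := by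
  rw [qPoch, qPoch, Finset.prod_range_succ]

lemma one_sub_pow_ne (n : ℕ) : (1 : ℂ) - q ^ (n + 1) ≠ 0 := by
  intro h
  have h2 : ‖q ^ (n+1)‖ < 1 := by
    rw [norm_pow]; exact pow_lt_one₀ (norm_nonneg q) hq (Nat.succ_ne_zero n)
  have : (1:ℂ) = q ^ (n+1) := by linear_combination h
  rw [← this] at h2; simp at h2

lemma S_funceq {z : ℂ} (hz : ‖z‖ < 1) : (1 - z) * S q z = S q (q * z) := by
  have hqz : ‖q * z‖ < 1 := by
    rw [norm_mul]
    calc ‖q‖ * ‖z‖ ≤ 1 * ‖z‖ := by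
          apply mul_le_mul_of_nonneg_right hq.le (norm_nonneg z)
      _ = ‖z‖ := one_mul _
      _ < 1 := hz
  have h1 := summable_S hq hz
  have h2 := summable_S hq hqz
  have hsub : S q z - S q (q * z) = ∑' n : ℕ, (z ^ n - (q * z) ^ n) / qPoch q n := by
    rw [S, S, ← Summable.tsum_sub h1 h2]
    exact tsum_congr fun n => (sub_div _ _ _).symm
  have hterm : ∀ n : ℕ, (z ^ (n+1) - (q * z) ^ (n+1)) / qPoch q (n+1)
      = z * (z ^ n / qPoch q n) := by
    intro n
    rw [qPoch_succ hq, mul_pow]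
    field_simp [qPoch_ne_zero hq n, one_sub_pow_ne hq n]
    ring
  have hsum3 : Summable (fun n : ℕ => (z ^ n - (q * z) ^ n) / qPoch q n) := by
    apply Summable.congr (h1.sub h2)
    intro n; exact (sub_div _ _ _).symm
  have : S q z - S q (q * z) = z * S q z := by
    rw [hsub, Summable.tsum_eq_zero_add hsum3]
    simp only [pow_zero, sub_self, zero_div, zero_add]
    rw [S, ← tsum_mul_left]
    exact tsum_congr hterm
  linear_combination this

-- pochInf as exp of sum of logs
lemma summable_geom_z (z : ℂ) : Summable (fun i : ℕ => z * q ^ i) :=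
  (summable_geometric_of_norm_lt_one hq).mul_left z

lemma summable_log_poch (z : ℂ) : Summable (fun i : ℕ => Complex.log (1 - z * q ^ i)) :=
  (summable_geom_z hq z).clog_one_sub

lemma factor_ne_zero {z : ℂ} (hz : ‖z‖ < 1) (i : ℕ) : (1 : ℂ) - z * q ^ i ≠ 0 := by
  intro h
  have h2 : ‖z * q ^ i‖ < 1 := by
    rw [norm_mul, norm_pow]
    calc ‖z‖ * ‖q‖ ^ i ≤ ‖z‖ * 1 := by
          apply mul_le_mul_of_nonneg_left (pow_le_one₀ (norm_nonneg q) hq.le) (norm_nonneg z)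
      _ = ‖z‖ := mul_one _
      _ < 1 := hz
  have : (1:ℂ) = z * q ^ i := by linear_combination h
  rw [← this] at h2; simp at h2

lemma pochInf_eq_exp {z : ℂ} (hz : ‖z‖ < 1) :
    pochInf z q = Complex.exp (∑' i : ℕ, Complex.log (1 - z * q ^ i)) := by
  have := Complex.cexp_tsum_eq_tprod (f := fun (i : ℕ) => 1 - z * q ^ i)
    (fun i => factor_ne_zero hq hz i) (summable_log_poch hq z)
  exact this.symm

lemma pochInf_ne_zero {z : ℂ} (hz : ‖z‖ < 1) : pochInf z q ≠ 0 := by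
  rw [pochInf_eq_exp hq hz]; exact Complex.exp_ne_zero _

lemma multipliable_poch {z : ℂ} (hz : ‖z‖ < 1) :
    Multipliable (fun i : ℕ => 1 - z * q ^ i) :=
  Complex.multipliable_of_summable_log (f := fun (i : ℕ) => 1 - z * q ^ i)
    (summable_log_poch hq z)

set_option maxHeartbeats 1000000 in
lemma pochInf_funceq {z : ℂ} (hz : ‖z‖ < 1) :
    pochInf z q = (1 - z) * pochInf (q * z) q := by
  have hqz : ‖q * z‖ < 1 := by
    rw [norm_mul]
    calc ‖q‖ * ‖z‖ ≤ 1 * ‖z‖ := mul_le_mul_of_nonneg_right hq.le (norm_nonneg z)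
      _ = ‖z‖ := one_mul _
      _ < 1 := hz
  have hf : Multipliable (fun n : ℕ => 1 - z * q ^ (n + 1)) :=
    (multipliable_poch hq hqz).congr (fun i => by ring)
  rw [pochInf, tprod_eq_zero_mul' hf]
  congr 1
  · simp
  · rw [pochInf]
    exact tprod_congr fun i => by ring
lemma norm_pow_mul_lt {z : ℂ} (hz : ‖z‖ < 1) (k : ℕ) : ‖q ^ k * z‖ < 1 := by
  rw [norm_mul, norm_pow]
  calc ‖q‖ ^ k * ‖z‖ ≤ 1 * ‖z‖ :=
        mul_le_mul_of_nonneg_right (pow_le_one₀ (norm_nonneg q) hq.le) (norm_nonneg z)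
    _ = ‖z‖ := one_mul _
    _ < 1 := hz

lemma g_invariant {z : ℂ} (hz : ‖z‖ < 1) (k : ℕ) :
    pochInf z q * S q z = pochInf (q ^ k * z) q * S q (q ^ k * z) := by
  induction k with
  | zero => simp
  | succ k ih =>
    have hzk : ‖q ^ k * z‖ < 1 := norm_pow_mul_lt hq hz k
    calc pochInf z q * S q z = pochInf (q^k*z) q * S q (q^k*z) := ih
      _ = (1 - q^k*z) * pochInf (q*(q^k*z)) q * S q (q^k*z) := by
          rw [← pochInf_funceq hq hzk]
      _ = pochInf (q*(q^k*z)) q * ((1 - q^k*z) * S q (q^k*z)) := by ring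
      _ = pochInf (q*(q^k*z)) q * S q (q*(q^k*z)) := by rw [S_funceq hq hzk]
      _ = pochInf (q^(k+1)*z) q * S q (q^(k+1)*z) := by
          rw [show q*(q^k*z) = q^(k+1)*z by ring]

lemma S_zero : S q 0 = 1 := by
  rw [S, tsum_eq_single 0 (fun n hn => by
    rw [zero_pow hn, zero_div])]
  simp [qPoch]

lemma S_tendsto {z : ℂ} (hz : ‖z‖ < 1) :
    Tendsto (fun k : ℕ => S q (q ^ k * z)) atTop (𝓝 1) := by
  have key : Tendsto (fun k : ℕ => ∑' n : ℕ, (q ^ k * z) ^ n / qPoch q n) atTop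
      (𝓝 (∑' n : ℕ, (0 : ℂ) ^ n / qPoch q n)) := by
    refine tendsto_tsum_of_dominated_convergence
      (f := fun (k : ℕ) (n : ℕ) => (q ^ k * z) ^ n / qPoch q n)
      (g := fun n => (0:ℂ) ^ n / qPoch q n)
      (bound := fun n => ‖z‖ ^ n * (qc q)⁻¹) ?_ ?_ ?_
    · exact (summable_geometric_of_lt_one (norm_nonneg z) hz).mul_right _
    · intro n
      have : Tendsto (fun k : ℕ => (q ^ k * z) ^ n) atTop (𝓝 ((0 * z) ^ n)) :=
        (((tendsto_pow_atTop_nhds_zero_of_norm_lt_one hq).mul_const z).pow n)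
      rw [zero_mul] at this
      exact this.div_const _
    · filter_upwards with k
      intro n
      rw [norm_div, norm_pow]
      have hle : ‖q ^ k * z‖ ≤ ‖z‖ := by
        rw [norm_mul, norm_pow]
        calc ‖q‖ ^ k * ‖z‖ ≤ 1 * ‖z‖ :=
              mul_le_mul_of_nonneg_right (pow_le_one₀ (norm_nonneg q) hq.le) (norm_nonneg z)
          _ = ‖z‖ := one_mul _
      calc ‖q ^ k * z‖ ^ n / ‖qPoch q n‖ ≤ ‖z‖ ^ n / qc q :=
            div_le_div₀ (by positivity) (pow_le_pow_left₀ (norm_nonneg _) hle n)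
              (qc_pos (q := q)) (qc_le_qPoch hq n)
        _ = ‖z‖ ^ n * (qc q)⁻¹ := div_eq_mul_inv _ _
  have h1 : (∑' n : ℕ, (0 : ℂ) ^ n / qPoch q n) = 1 := S_zero hq
  rw [h1] at key
  exact key

lemma pochInf_partial (z : ℂ) {hz : ‖z‖ < 1} (k : ℕ) :
    pochInf z q = (∏ i ∈ Finset.range k, (1 - z * q ^ i)) * pochInf (q ^ k * z) q := by
  induction k with
  | zero => simp
  | succ k ih =>
    have hzk : ‖q ^ k * z‖ < 1 := norm_pow_mul_lt hq hz k
    rw [ih, pochInf_funceq hq hzk, Finset.prod_range_succ]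
    have : q * (q ^ k * z) = q ^ (k+1) * z := by ring
    rw [this]
    ring

lemma pochInf_tendsto {z : ℂ} (hz : ‖z‖ < 1) :
    Tendsto (fun k : ℕ => pochInf (q ^ k * z) q) atTop (𝓝 1) := by
  have hmul := multipliable_poch hq hz
  have hpartial : Tendsto (fun k : ℕ => ∏ i ∈ Finset.range k, (1 - z * q ^ i)) atTop
      (𝓝 (pochInf z q)) := hmul.hasProd.tendsto_prod_nat
  have hne : ∀ k : ℕ, (∏ i ∈ Finset.range k, (1 - z * q ^ i)) ≠ 0 := fun k =>
    Finset.prod_ne_zero_iff.mpr (fun i _ => factor_ne_zero hq hz i)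
  have heq : ∀ k : ℕ, pochInf (q ^ k * z) q
      = pochInf z q / (∏ i ∈ Finset.range k, (1 - z * q ^ i)) := by
    intro k
    rw [eq_div_iff (hne k), mul_comm]
    exact (pochInf_partial hq z (hz := hz) k).symm
  have : Tendsto (fun k : ℕ => pochInf z q / (∏ i ∈ Finset.range k, (1 - z * q ^ i))) atTop
      (𝓝 (pochInf z q / pochInf z q)) :=
    tendsto_const_nhds.div hpartial (pochInf_ne_zero hq hz)
  rw [div_self (pochInf_ne_zero hq hz)] at this
  exact this.congr (fun k => (heq k).symm)

lemma euler {z : ℂ} (hz : ‖z‖ < 1) : 1 / pochInf z q = S q z := by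
  have key : pochInf z q * S q z = 1 := by
    have hconst : Tendsto (fun _ : ℕ => pochInf z q * S q z) atTop
        (𝓝 (pochInf z q * S q z)) := tendsto_const_nhds
    have hlim : Tendsto (fun k : ℕ => pochInf (q ^ k * z) q * S q (q ^ k * z)) atTop
        (𝓝 (1 * 1)) := (pochInf_tendsto hq hz).mul (S_tendsto hq hz)
    rw [one_mul] at hlim
    have := hconst.congr (fun k => g_invariant hq hz k)
    exact tendsto_nhds_unique this hlim
  rw [eq_comm, eq_div_iff (pochInf_ne_zero hq hz)]
  linear_combination key

end aux

end Stmt11Aux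

open Stmt11Aux in
theorem stmt11 (q : ℂ) (hq : ‖q‖ < 1) (hq0 : q ≠ 0) :
    ∑' n : ℕ, q ^ n / (qPoch q n * (1 - q ^ (n + 1)) ^ 2)
      = q⁻¹ * ∑' m : ℕ, (1 / pochInf (q ^ (1 + m)) q - 1) := by
  have hqn : ∀ m : ℕ, ‖q ^ (m + 1)‖ < 1 := fun m => by
    rw [norm_pow]
    exact pow_lt_one₀ (norm_nonneg q) hq (by omega)
  have hq1m : ∀ m : ℕ, ‖q ^ (1 + m)‖ < 1 := fun m => by rw [add_comm]; exact hqn m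
  set a : ℕ → ℕ → ℂ := fun m n => q ^ ((1 + m) * (n + 1)) / qPoch q (n + 1) with ha
  -- Step 1: rewrite each summand on RHS as a tsum over n
  have hinner : ∀ m : ℕ, 1 / pochInf (q ^ (1 + m)) q - 1 = ∑' n : ℕ, a m n := by
    intro m
    rw [euler hq (hq1m m), S, Summable.tsum_eq_zero_add (summable_S hq (hq1m m))]
    have h0 : (q ^ (1 + m)) ^ (0:ℕ) / qPoch q 0 = 1 := by simp [qPoch]
    rw [h0, add_sub_cancel_left]
    refine tsum_congr fun n => ?_
    show (q ^ (1 + m)) ^ (n+1) / qPoch q (n + 1) = q ^ ((1 + m) * (n + 1)) / qPoch q (n + 1)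
    rw [pow_mul]
  -- Step 2: summability of the double series
  have hsummable : Summable (Function.uncurry a) := by
    apply Summable.of_norm_bounded
      (g := fun p : ℕ × ℕ => ‖q‖ ^ p.1 * (‖q‖ ^ (p.2 + 1) * (qc q)⁻¹))
    · exact Summable.mul_of_nonneg (f := fun m : ℕ => ‖q‖ ^ m)
        (g := fun n : ℕ => ‖q‖ ^ (n + 1) * (qc q)⁻¹)
        (summable_geometric_of_lt_one (norm_nonneg q) hq)
        (Summable.mul_right _ ((summable_geometric_of_lt_one (norm_nonneg q) hq).comp_injective
          (add_left_injective 1)))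
        (fun x => by positivity) (fun x => by have := qc_pos (q := q); positivity)
    · rintro ⟨m, n⟩
      simp only [Function.uncurry, ha, norm_div, norm_pow]
      have hexp : m + (n + 1) ≤ (1 + m) * (n + 1) := by nlinarith
      calc ‖q‖ ^ ((1+m)*(n+1)) / ‖qPoch q (n+1)‖ ≤ ‖q‖ ^ (m + (n+1)) / qc q :=
            div_le_div₀ (by positivity)
              (pow_le_pow_of_le_one (norm_nonneg q) hq.le hexp)
              (qc_pos (q := q)) (qc_le_qPoch hq (n+1))
        _ = ‖q‖ ^ m * (‖q‖ ^ (n+1) * (qc q)⁻¹) := by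
            rw [pow_add, div_eq_mul_inv, mul_assoc]
  -- Step 3: swap and evaluate inner geometric sum
  have hswap : ∑' m : ℕ, ∑' n : ℕ, a m n = ∑' n : ℕ, ∑' m : ℕ, a m n :=
    (Summable.tsum_comm hsummable).symm
  have hgeo : ∀ n : ℕ, ∑' m : ℕ, a m n
      = q ^ (n+1) / qPoch q (n+1) * (1 - q ^ (n+1))⁻¹ := by
    intro n
    have h1 : ∀ m : ℕ, a m n = q ^ (n+1) / qPoch q (n+1) * (q ^ (n+1)) ^ m := by
      intro m
      show q ^ ((1 + m) * (n + 1)) / qPoch q (n + 1)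
        = q ^ (n+1) / qPoch q (n+1) * (q ^ (n+1)) ^ m
      rw [show (1+m)*(n+1) = (n+1) + (n+1)*m by ring, pow_add, pow_mul]
      ring
    rw [tsum_congr h1, tsum_mul_left, tsum_geometric_of_norm_lt_one (hqn n)]
  -- Step 4: conclusion
  calc ∑' n : ℕ, q ^ n / (qPoch q n * (1 - q ^ (n + 1)) ^ 2)
      = ∑' n : ℕ, q⁻¹ * (q ^ (n+1) / qPoch q (n+1) * (1 - q ^ (n+1))⁻¹) := by
        apply tsum_congr
        intro n
        rw [qPoch_succ hq n]
        field_simp [qPoch_ne_zero hq n, one_sub_pow_ne hq n]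
        ring
    _ = q⁻¹ * ∑' n : ℕ, (q ^ (n+1) / qPoch q (n+1) * (1 - q ^ (n+1))⁻¹) := tsum_mul_left
    _ = q⁻¹ * ∑' m : ℕ, (1 / pochInf (q ^ (1 + m)) q - 1) := by
        rw [tsum_congr hinner, hswap, tsum_congr hgeo]
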